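/- Let g : [0,∞) → [0,∞) and let s : [0,∞) → [0,∞) be nondecreasing such that for every y ≥ 0, s(y) is a global minimizer over σ ∈ [0,∞) of σ ↦ (1/2)(σ − y)² + ρ·g(σ), where ρ > 0. Let M be a real 2×2 matrix with singular value decomposition M = U · diag(σ₁, σ₂) · Vᵀ, where U, V are orthogonal and σ₁ ≥ σ₂ ≥ 0 are the singular values of M. Then H* := U · diag(s(σ₁), s(σ₂)) · Vᵀ is a global minimizer over H ∈ ℝ^{2×2} of the cost H ↦ (1/2)‖M − H‖_F² + ρ·( g(σ₁(H)) + g(σ₂(H)) ). -/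

import Mathlib

open Matrix

/-- Helper (removed from Mathlib): `Aᵀ * A` is Hermitian over a ring with trivial star. -/
theorem Matrix.isHermitian_transpose_mul_self {m n α : Type*} [Fintype m] [CommSemiring α]
    [StarRing α] [TrivialStar α] (A : Matrix m n α) : (Aᵀ * A).IsHermitian := by
  simp [IsHermitian, conjTranspose_mul, conjTranspose_eq_transpose_of_trivial]

/-- Singular values of a real `n × n` matrix, in decreasing order:
the square roots of the eigenvalues of `Aᵀ * A`, sorted decreasingly
(so `singularValues A 0` is the largest). -/
noncomputable def singularValues {n : ℕ} (A : Matrix (Fin n) (Fin n) ℝ) : Fin n → ℝ :=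
  fun i => Real.sqrt ((Matrix.isHermitian_transpose_mul_self A).eigenvalues
      (Tuple.sort (Matrix.isHermitian_transpose_mul_self A).eigenvalues i.rev))

section Aux

lemma sum_sq_eq_trace (A : Matrix (Fin 2) (Fin 2) ℝ) :
    ∑ i : Fin 2, ∑ j : Fin 2, (A i j)^2 = Matrix.trace (Aᵀ * A) := by
  simp [Matrix.trace, Matrix.mul_apply, Matrix.diag, Fin.sum_univ_two]; ring

lemma trace_eq_sum_eigenvalues {n : ℕ} {A : Matrix (Fin n) (Fin n) ℝ} (hA : A.IsHermitian) :
    Matrix.trace A = ∑ i, hA.eigenvalues i := by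
  nth_rewrite 1 [hA.spectral_theorem]
  rw [Unitary.conjStarAlgAut_apply, Matrix.trace_mul_cycle, Unitary.coe_star_mul_self]
  simp [Matrix.trace_diagonal]

lemma sv_nonneg (A : Matrix (Fin 2) (Fin 2) ℝ) (i : Fin 2) : 0 ≤ singularValues A i :=
  Real.sqrt_nonneg _

lemma sv_ord (A : Matrix (Fin 2) (Fin 2) ℝ) : singularValues A 1 ≤ singularValues A 0 := by
  apply Real.sqrt_le_sqrt
  have h := Tuple.monotone_sort ((Matrix.isHermitian_transpose_mul_self A).eigenvalues)
    (show (0 : Fin 2) ≤ 1 by decide)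
  have h0 : (0 : Fin 2).rev = 1 := by decide
  have h1 : (1 : Fin 2).rev = 0 := by decide
  rw [h0, h1]
  exact h

lemma sv_sq (A : Matrix (Fin 2) (Fin 2) ℝ) (i : Fin 2) :
    (singularValues A i)^2 = (Matrix.isHermitian_transpose_mul_self A).eigenvalues
      (Tuple.sort (Matrix.isHermitian_transpose_mul_self A).eigenvalues i.rev) :=
  Real.sq_sqrt (Matrix.eigenvalues_conjTranspose_mul_self_nonneg A _)

lemma sv_sq_add (A : Matrix (Fin 2) (Fin 2) ℝ) :
    (singularValues A 0)^2 + (singularValues A 1)^2 = ∑ i : Fin 2, ∑ j : Fin 2, (A i j)^2 := by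
  rw [sv_sq, sv_sq, sum_sq_eq_trace,
    trace_eq_sum_eigenvalues (Matrix.isHermitian_transpose_mul_self A),
    ← Equiv.sum_comp (Tuple.sort (Matrix.isHermitian_transpose_mul_self A).eigenvalues),
    Fin.sum_univ_two]
  have h0 : (0 : Fin 2).rev = 1 := by decide
  have h1 : (1 : Fin 2).rev = 0 := by decide
  rw [h0, h1]; ring

lemma sv_mul (A : Matrix (Fin 2) (Fin 2) ℝ) :
    singularValues A 0 * singularValues A 1 = |A.det| := by
  have hA := Matrix.isHermitian_transpose_mul_self A
  have hsq : (singularValues A 0 * singularValues A 1)^2 = (A.det)^2 := by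
    rw [mul_pow, sv_sq, sv_sq]
    have hdet : (Aᴴ * A).det = ∏ i, hA.eigenvalues i := by
      simpa using hA.det_eq_prod_eigenvalues
    have hdet2 : (Aᴴ * A).det = A.det ^ 2 := by
      rw [Matrix.det_mul, Matrix.conjTranspose_eq_transpose_of_trivial, Matrix.det_transpose, sq]
    rw [← Equiv.prod_comp (Tuple.sort hA.eigenvalues), Fin.prod_univ_two] at hdet
    have h0 : (0 : Fin 2).rev = 1 := by decide
    have h1 : (1 : Fin 2).rev = 0 := by decide
    rw [h0, h1]
    rw [hdet2] at hdet
    linarith [hdet]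
  have h1 := mul_nonneg (sv_nonneg A 0) (sv_nonneg A 1)
  calc singularValues A 0 * singularValues A 1
      = Real.sqrt ((singularValues A 0 * singularValues A 1)^2) := (Real.sqrt_sq h1).symm
    _ = Real.sqrt ((A.det)^2) := by rw [hsq]
    _ = |A.det| := Real.sqrt_sq_eq_abs _

lemma pair_unique {a b t0 t1 : ℝ} (hab : b ≤ a) (hb : 0 ≤ b) (ht : t1 ≤ t0) (ht1 : 0 ≤ t1)
    (hsum : t0^2 + t1^2 = a^2 + b^2) (hprod : t0 * t1 = a * b) : t0 = a ∧ t1 = b := by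
  have h1 : t0 + t1 = a + b := by
    nlinarith [sq_nonneg (t0 + t1 - (a + b)), sq_nonneg (t0 + t1 + (a + b))]
  have h2 : t0 - t1 = a - b := by
    nlinarith [sq_nonneg (t0 - t1 - (a - b)), sq_nonneg (t0 - t1 + (a - b))]
  constructor <;> linarith

lemma vn {s1 s2 a b c d t0 t1 : ℝ} (hs : s2 ≤ s1) (hs2 : 0 ≤ s2)
    (ht : t1 ≤ t0) (ht1 : 0 ≤ t1)
    (hsum : t0^2 + t1^2 = a^2 + b^2 + c^2 + d^2) (hprod : t0 * t1 = |a*d - b*c|) :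
    s1 * a + s2 * d ≤ s1 * t0 + s2 * t1 := by
  have habs1 : a*d - b*c ≤ |a*d - b*c| := le_abs_self _
  have hx2 : (t0 * t1)^2 = (a*d - b*c)^2 := by rw [hprod, sq_abs]
  have key1 : (a + d)^2 ≤ (t0 + t1)^2 := by nlinarith [sq_nonneg (b - c)]
  have e1 : a + d ≤ t0 + t1 := by nlinarith [key1]
  have key3 : (a^2 + c^2 - t0^2) * (a^2 + c^2 - t1^2) = -(a*b + c*d)^2 := by
    linear_combination (-(a^2 + c^2)) * hsum + hx2
  have ha2 : a^2 + c^2 ≤ t0^2 := by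
    by_contra hcon
    push_neg at hcon
    have h2 : t1^2 < a^2 + c^2 := by nlinarith
    nlinarith [mul_pos (sub_pos.mpr h2) (sub_pos.mpr hcon), key3, sq_nonneg (a*b + c*d)]
  have ha : a ≤ t0 := by nlinarith [ha2, sq_nonneg c]
  nlinarith [mul_le_mul_of_nonneg_left e1 hs2,
             mul_le_mul_of_nonneg_left ha (by linarith : (0:ℝ) ≤ s1 - s2)]

lemma trace_conj (P B Q : Matrix (Fin 2) (Fin 2) ℝ) (hP : Pᵀ * P = 1) (hQ : Q * Qᵀ = 1) :
    Matrix.trace ((P * B * Q)ᵀ * (P * B * Q)) = Matrix.trace (Bᵀ * B) := by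
  have h : (P * B * Q)ᵀ * (P * B * Q) = Qᵀ * (Bᵀ * (Pᵀ * P) * B) * Q := by
    simp only [Matrix.transpose_mul, Matrix.mul_assoc]
  rw [h, hP, mul_one, ← Matrix.trace_mul_cycle, Matrix.mul_assoc, hQ, mul_one]

lemma frob_UDV (U V : Matrix (Fin 2) (Fin 2) ℝ) (x y : ℝ)
    (hU1 : Uᵀ * U = 1) (hV1 : Vᵀ * V = 1) :
    ∑ i : Fin 2, ∑ j : Fin 2, ((U * Matrix.diagonal ![x, y] * Vᵀ) i j)^2 = x^2 + y^2 := by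
  rw [sum_sq_eq_trace,
    trace_conj U _ Vᵀ hU1 (by rw [Matrix.transpose_transpose]; exact hV1)]
  simp [Matrix.diagonal_transpose, Matrix.diagonal_mul_diagonal, Matrix.trace_diagonal,
    Fin.sum_univ_two, sq]

lemma det_UDV_abs (U V : Matrix (Fin 2) (Fin 2) ℝ) (x y : ℝ)
    (hdU : |U.det| = 1) (hdV : |V.det| = 1) :
    |(U * Matrix.diagonal ![x, y] * Vᵀ).det| = |x * y| := by
  rw [Matrix.det_mul, Matrix.det_mul, abs_mul, abs_mul, Matrix.det_transpose, hdU, hdV,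
    Matrix.det_diagonal, Fin.prod_univ_two]
  simp

lemma trace_MT_H (U V H : Matrix (Fin 2) (Fin 2) ℝ) (x y : ℝ) :
    Matrix.trace ((U * Matrix.diagonal ![x, y] * Vᵀ)ᵀ * H) =
      x * (Uᵀ * H * V) 0 0 + y * (Uᵀ * H * V) 1 1 := by
  simp [Matrix.trace, Matrix.diag, Matrix.mul_apply, Fin.sum_univ_two,
    Matrix.diagonal, Matrix.transpose_apply]
  ring

lemma expand_sub (M H : Matrix (Fin 2) (Fin 2) ℝ) :
    ∑ i : Fin 2, ∑ j : Fin 2, (M i j - H i j)^2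
      = (∑ i : Fin 2, ∑ j : Fin 2, (M i j)^2) + (∑ i : Fin 2, ∑ j : Fin 2, (H i j)^2)
        - 2 * Matrix.trace (Mᵀ * H) := by
  simp [Matrix.trace, Matrix.diag, Matrix.mul_apply, Fin.sum_univ_two]; ring

lemma abs_det_one_of_orth {U : Matrix (Fin 2) (Fin 2) ℝ} (h : Uᵀ * U = 1) : |U.det| = 1 := by
  have hd : U.det * U.det = 1 := by
    have := congrArg Matrix.det h
    rwa [Matrix.det_mul, Matrix.det_transpose, Matrix.det_one] at this
  rcases mul_self_eq_one_iff.mp hd with h1 | h1 <;> simp [h1]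

end Aux

/-- closed-form solution of the matrix proximal step for a spectral penalty.
If `s(y)` minimizes `σ ↦ ½(σ − y)² + ρ g(σ)` over `σ ≥ 0` for each `y ≥ 0`, `s` is
nondecreasing (and nonnegative) on `[0,∞)`, and `M = U·diag(σ₁,σ₂)·Vᵀ` is an SVD of `M`
(with `σ₁ ≥ σ₂ ≥ 0` the singular values of `M`), then `H* = U·diag(s(σ₁),s(σ₂))·Vᵀ`
globally minimizes `H ↦ ½‖M − H‖_F² + ρ(g(σ₁(H)) + g(σ₂(H)))`. -/
theorem svd_shrinkage_minimizes_prox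
    (g s : ℝ → ℝ) (ρ : ℝ) (hρ : 0 < ρ)
    (hs_mono : MonotoneOn s (Set.Ici 0))
    (hs_nonneg : ∀ y ∈ Set.Ici (0 : ℝ), 0 ≤ s y)
    (hs_min : ∀ y ∈ Set.Ici (0 : ℝ), ∀ σ ∈ Set.Ici (0 : ℝ),
      (1 / 2) * (s y - y) ^ 2 + ρ * g (s y) ≤ (1 / 2) * (σ - y) ^ 2 + ρ * g σ)
    (M U V : Matrix (Fin 2) (Fin 2) ℝ) (σ₁ σ₂ : ℝ)
    (hU : U ∈ Matrix.orthogonalGroup (Fin 2) ℝ)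
    (hV : V ∈ Matrix.orthogonalGroup (Fin 2) ℝ)
    (hord : σ₁ ≥ σ₂) (hσ₂ : σ₂ ≥ 0)
    (hM : M = U * Matrix.diagonal ![σ₁, σ₂] * Vᵀ)
    (hσ₁sv : σ₁ = singularValues M 0) (hσ₂sv : σ₂ = singularValues M 1) :
    ∀ H : Matrix (Fin 2) (Fin 2) ℝ,
      (1 / 2) * (∑ i : Fin 2, ∑ j : Fin 2,
          (M i j - (U * Matrix.diagonal ![s σ₁, s σ₂] * Vᵀ) i j) ^ 2) +
        ρ * (g (singularValues (U * Matrix.diagonal ![s σ₁, s σ₂] * Vᵀ) 0) +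
             g (singularValues (U * Matrix.diagonal ![s σ₁, s σ₂] * Vᵀ) 1)) ≤
      (1 / 2) * (∑ i : Fin 2, ∑ j : Fin 2, (M i j - H i j) ^ 2) +
        ρ * (g (singularValues H 0) + g (singularValues H 1)) := by
  intro H
  -- orthogonality facts
  have hU1 : Uᵀ * U = 1 := by
    have h := (Matrix.mem_orthogonalGroup_iff' (Fin 2) ℝ).mp hU
    simpa [Matrix.star_eq_conjTranspose, Matrix.conjTranspose_eq_transpose_of_trivial] using h
  have hU2 : U * Uᵀ = 1 := by
    have h := (Matrix.mem_orthogonalGroup_iff (Fin 2) ℝ).mp hU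
    simpa [Matrix.star_eq_conjTranspose, Matrix.conjTranspose_eq_transpose_of_trivial] using h
  have hV1 : Vᵀ * V = 1 := by
    have h := (Matrix.mem_orthogonalGroup_iff' (Fin 2) ℝ).mp hV
    simpa [Matrix.star_eq_conjTranspose, Matrix.conjTranspose_eq_transpose_of_trivial] using h
  have hV2 : V * Vᵀ = 1 := by
    have h := (Matrix.mem_orthogonalGroup_iff (Fin 2) ℝ).mp hV
    simpa [Matrix.star_eq_conjTranspose, Matrix.conjTranspose_eq_transpose_of_trivial] using h
  have hdU : |U.det| = 1 := abs_det_one_of_orth hU1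
  have hdV : |V.det| = 1 := abs_det_one_of_orth hV1
  -- basic facts on σ and s σ
  have hσ₁0 : (0:ℝ) ≤ σ₁ := le_trans hσ₂ hord
  have hσ₁mem : σ₁ ∈ Set.Ici (0:ℝ) := hσ₁0
  have hσ₂mem : σ₂ ∈ Set.Ici (0:ℝ) := hσ₂
  have hsord : s σ₂ ≤ s σ₁ := hs_mono hσ₂mem hσ₁mem hord
  have hs₁0 : 0 ≤ s σ₁ := hs_nonneg σ₁ hσ₁mem
  have hs₂0 : 0 ≤ s σ₂ := hs_nonneg σ₂ hσ₂mem
  set Hs : Matrix (Fin 2) (Fin 2) ℝ := U * Matrix.diagonal ![s σ₁, s σ₂] * Vᵀ with hHs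
  -- singular values of Hs
  have hfHs : (singularValues Hs 0)^2 + (singularValues Hs 1)^2 = (s σ₁)^2 + (s σ₂)^2 := by
    rw [sv_sq_add, hHs, frob_UDV U V _ _ hU1 hV1]
  have hdHs : singularValues Hs 0 * singularValues Hs 1 = s σ₁ * s σ₂ := by
    rw [sv_mul, hHs, det_UDV_abs U V _ _ hdU hdV, abs_of_nonneg (mul_nonneg hs₁0 hs₂0)]
  obtain ⟨hsv0, hsv1⟩ := pair_unique hsord hs₂0 (sv_ord Hs) (sv_nonneg Hs 1) hfHs hdHs
  -- ‖M − Hs‖² = (σ₁ − s σ₁)² + (σ₂ − s σ₂)²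
  have hvdiff : ![σ₁, σ₂] - ![s σ₁, s σ₂] = ![σ₁ - s σ₁, σ₂ - s σ₂] := by
    funext i; fin_cases i <;> simp
  have hdd : Matrix.diagonal ![σ₁, σ₂] - Matrix.diagonal ![s σ₁, s σ₂]
      = Matrix.diagonal ![σ₁ - s σ₁, σ₂ - s σ₂] := by
    rw [Matrix.diagonal_sub]
    exact congrArg Matrix.diagonal (by funext i; fin_cases i <;> simp)
  have hmat : M - Hs = U * Matrix.diagonal ![σ₁ - s σ₁, σ₂ - s σ₂] * Vᵀ := by
    rw [hM, hHs, ← hdd, Matrix.mul_sub, Matrix.sub_mul]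
  have hMHs : ∑ i : Fin 2, ∑ j : Fin 2, (M i j - Hs i j)^2
      = (σ₁ - s σ₁)^2 + (σ₂ - s σ₂)^2 := by
    have : ∀ i j, M i j - Hs i j = (U * Matrix.diagonal ![σ₁ - s σ₁, σ₂ - s σ₂] * Vᵀ) i j := by
      intro i j; rw [← hmat]; rfl
    simp only [this]
    exact frob_UDV U V _ _ hU1 hV1
  -- the general H side
  set t0 := singularValues H 0 with ht0def
  set t1 := singularValues H 1 with ht1def
  have ht01 : t1 ≤ t0 := sv_ord H
  have ht1n : 0 ≤ t1 := sv_nonneg H 1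
  have ht0n : 0 ≤ t0 := sv_nonneg H 0
  set A : Matrix (Fin 2) (Fin 2) ℝ := Uᵀ * H * V with hA
  have hfC : (A 0 0)^2 + (A 0 1)^2 + (A 1 0)^2 + (A 1 1)^2
      = ∑ i : Fin 2, ∑ j : Fin 2, (H i j)^2 := by
    have h1 : ∑ i : Fin 2, ∑ j : Fin 2, (A i j)^2 = Matrix.trace (Aᵀ * A) :=
      sum_sq_eq_trace A
    have h2 : Matrix.trace (Aᵀ * A) = Matrix.trace (Hᵀ * H) := by
      rw [hA]
      exact trace_conj Uᵀ H V (by rw [Matrix.transpose_transpose]; exact hU2) hV2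
    rw [sum_sq_eq_trace H, ← h2, ← h1, Fin.sum_univ_two, Fin.sum_univ_two, Fin.sum_univ_two]
    ring
  have hdC : |A.det| = |H.det| := by
    rw [hA, Matrix.det_mul, Matrix.det_mul, abs_mul, abs_mul, Matrix.det_transpose, hdU, hdV]
    ring
  have hsum' : t0^2 + t1^2 = (A 0 0)^2 + (A 0 1)^2 + (A 1 0)^2 + (A 1 1)^2 := by
    rw [ht0def, ht1def, sv_sq_add, hfC]
  have hprod' : t0 * t1 = |A 0 0 * A 1 1 - A 0 1 * A 1 0| := by
    rw [ht0def, ht1def, sv_mul, ← hdC, Matrix.det_fin_two]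
  have hVN : σ₁ * A 0 0 + σ₂ * A 1 1 ≤ σ₁ * t0 + σ₂ * t1 :=
    vn hord hσ₂ ht01 ht1n hsum' hprod'
  have htr : Matrix.trace (Mᵀ * H) = σ₁ * A 0 0 + σ₂ * A 1 1 := by
    rw [hM, hA]; exact trace_MT_H U V H σ₁ σ₂
  have hfM : ∑ i : Fin 2, ∑ j : Fin 2, (M i j)^2 = σ₁^2 + σ₂^2 := by
    rw [hM]; exact frob_UDV U V _ _ hU1 hV1
  have hfH : ∑ i : Fin 2, ∑ j : Fin 2, (H i j)^2 = t0^2 + t1^2 := by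
    rw [ht0def, ht1def, sv_sq_add]
  have hexp := expand_sub M H
  -- proximal scalar inequalities
  have hmin1 := hs_min σ₁ hσ₁mem t0 ht0n
  have hmin2 := hs_min σ₂ hσ₂mem t1 ht1n
  rw [hMHs, hsv0, hsv1]
  have e1 : (σ₁ - s σ₁)^2 = (s σ₁ - σ₁)^2 := by ring
  have e2 : (σ₂ - s σ₂)^2 = (s σ₂ - σ₂)^2 := by ring
  have e3 : (t0 - σ₁)^2 = t0^2 - 2*(σ₁*t0) + σ₁^2 := by ring
  have e4 : (t1 - σ₂)^2 = t1^2 - 2*(σ₂*t1) + σ₂^2 := by ring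
  linarith [hmin1, hmin2, hVN, hexp, hfM, hfH, htr, e1, e2, e3, e4]
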